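/- Let 𝒱 be a unital C*-algebra, let τ : ℝ → (𝒱 ≃⋆-alg 𝒱) be a one-parameter group of *-automorphisms (τ_{s+t} = τ_s ∘ τ_t, τ_0 = id) such that (t, a) ↦ τ_t(a) is continuous, and let W : ℝ → 𝒱 be continuous. Fix s ≤ t and set M := sup_{u∈[s,t]} ‖W(u)‖. For k ≥ 1 define I_k := i^k ∫_s^t ds₁ ∫_s^{s₁} ds₂ ⋯ ∫_s^{s_{k−1}} ds_k τ_{s_k}(W(s_k))⋯τ_{s₁}(W(s₁)) (the time-ordered iterated Bochner integral over the simplex {s ≤ s_k ≤ ⋯ ≤ s₁ ≤ t}). Then ‖I_k‖ ≤ M^k (t−s)^k / k! for every k ≥ 1, the Dyson series 𝔙_{t,s} := 1 + Σ_{k≥1} I_k converges absolutely in 𝒱, and ‖𝔙_{t,s}‖ ≤ exp(M(t−s)). -/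

import Mathlib

open MeasureTheory intervalIntegral in
/-- The `k`-th time-ordered iterated integral of the Dyson series:
`dysonTerm τ W s 0 t = 1` and
`dysonTerm τ W s (k+1) t = ∫_s^t (dysonTerm τ W s k u) · τ_u(W(u)) du`,
so that `dysonTerm τ W s k t
  = ∫_s^t ds₁ ∫_s^{s₁} ds₂ ⋯ ∫_s^{s_{k−1}} ds_k τ_{s_k}(W(s_k))⋯τ_{s₁}(W(s₁))`. -/
noncomputable def dysonTerm {𝒱 : Type*} [NormedRing 𝒱] [StarRing 𝒱]
    [NormedAlgebra ℂ 𝒱] [CompleteSpace 𝒱]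
    (τ : ℝ → (𝒱 ≃⋆ₐ[ℂ] 𝒱)) (W : ℝ → 𝒱) (s : ℝ) : ℕ → ℝ → 𝒱
  | 0, _ => 1
  | k + 1, t => ∫ u in s..t, dysonTerm τ W s k u * (τ u (W u))

set_option maxHeartbeats 800000 in
/-- **Absolute convergence of the Dyson series.**  Let `𝒱` be a unital C*-algebra,
`τ` a strongly continuous one-parameter group of *-automorphisms of `𝒱`, and
`W : ℝ → 𝒱` continuous.  Fix `s ≤ t` and let `M := sup_{u∈[s,t]} ‖W(u)‖`.  Then the
`k`-th term `I_k := i^k ∫_s^t ds₁ ⋯ ∫_s^{s_{k−1}} ds_k τ_{s_k}(W(s_k))⋯τ_{s₁}(W(s₁))`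
satisfies `‖I_k‖ ≤ M^k (t−s)^k / k!` for `k ≥ 1`, the Dyson series
`𝔙_{t,s} = 1 + Σ_{k≥1} I_k` converges absolutely, and `‖𝔙_{t,s}‖ ≤ exp(M(t−s))`. -/
theorem dyson_series_bound
    {𝒱 : Type*} [NormedRing 𝒱] [StarRing 𝒱] [CStarRing 𝒱]
    [NormedAlgebra ℂ 𝒱] [CompleteSpace 𝒱] [StarModule ℂ 𝒱]
    (τ : ℝ → (𝒱 ≃⋆ₐ[ℂ] 𝒱))
    (hgroup : ∀ s t : ℝ, ∀ a : 𝒱, τ (s + t) a = τ s (τ t a))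
    (hid : ∀ a : 𝒱, τ 0 a = a)
    (hcont : Continuous fun p : ℝ × 𝒱 => τ p.1 p.2)
    (W : ℝ → 𝒱) (hW : Continuous W)
    (s t : ℝ) (hst : s ≤ t)
    (M : ℝ) (hM : M = sSup ((fun u => ‖W u‖) '' Set.Icc s t)) :
    (∀ k : ℕ, 1 ≤ k →
      ‖(Complex.I ^ k) • dysonTerm τ W s k t‖ ≤ M ^ k * (t - s) ^ k / (Nat.factorial k)) ∧
    Summable (fun k : ℕ => ‖(Complex.I ^ (k + 1)) • dysonTerm τ W s (k + 1) t‖) ∧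
    ‖(1 : 𝒱) + ∑' k : ℕ, (Complex.I ^ (k + 1)) • dysonTerm τ W s (k + 1) t‖ ≤
      Real.exp (M * (t - s)) := by
  letI : CStarAlgebra 𝒱 := {}
  have hτ : ∀ u : ℝ, ∀ a : 𝒱, ‖τ u a‖ = ‖a‖ := fun u a => StarAlgEquiv.norm_map (τ u) a
  have hone : ‖(1 : 𝒱)‖ ≤ 1 := by
    rcases subsingleton_or_nontrivial 𝒱 with h | h
    · simp [Subsingleton.elim (1 : 𝒱) 0]
    · exact le_of_eq CStarRing.norm_one
  have hMnn : 0 ≤ M := by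
    rw [hM]
    exact Real.sSup_nonneg (by rintro x ⟨u, _, rfl⟩; exact norm_nonneg _)
  have hbdd : BddAbove ((fun u => ‖W u‖) '' Set.Icc s t) :=
    (isCompact_Icc.image (continuous_norm.comp hW)).bddAbove
  have hWle : ∀ u ∈ Set.Icc s t, ‖W u‖ ≤ M := fun u hu =>
    hM ▸ le_csSup hbdd ⟨u, hu, rfl⟩
  -- continuity of the integrand pieces
  have hτW : Continuous fun u : ℝ => τ u (W u) :=
    hcont.comp (continuous_id.prodMk hW)
  have hcontTerm : ∀ k : ℕ, Continuous fun u => dysonTerm τ W s k u := by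
    intro k
    induction k with
    | zero => exact continuous_const
    | succ k ih =>
      have hint : Continuous fun u => dysonTerm τ W s k u * τ u (W u) := ih.mul hτW
      show Continuous fun u => ∫ v in s..u, dysonTerm τ W s k v * τ v (W v)
      exact intervalIntegral.continuous_primitive (fun a b => hint.intervalIntegrable a b) s
  -- the key pointwise bound
  have key : ∀ k : ℕ, ∀ u ∈ Set.Icc s t,
      ‖dysonTerm τ W s k u‖ ≤ M ^ k * (u - s) ^ k / (Nat.factorial k) := by
    intro k
    induction k with
    | zero => intro u hu; simpa [dysonTerm] using hone
    | succ k ih =>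
      intro u hu
      have hsu : s ≤ u := hu.1
      have hut : u ≤ t := hu.2
      have hint : Continuous fun v => dysonTerm τ W s k v * τ v (W v) :=
        (hcontTerm k).mul hτW
      have hbound : ∀ᵐ v ∂(MeasureTheory.volume.restrict (Set.uIoc s u)),
          ‖dysonTerm τ W s k v * τ v (W v)‖ ≤ M ^ (k + 1) * (v - s) ^ k / (Nat.factorial k) := by
        refine (MeasureTheory.ae_restrict_mem measurableSet_uIoc).mono fun v hv => ?_
        rw [Set.uIoc_of_le hsu] at hv
        have hvmem : v ∈ Set.Icc s t := ⟨le_of_lt hv.1, hv.2.trans hut⟩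
        have hvs : 0 ≤ v - s := by linarith [hv.1.le]
        calc ‖dysonTerm τ W s k v * τ v (W v)‖
            ≤ ‖dysonTerm τ W s k v‖ * ‖τ v (W v)‖ := norm_mul_le _ _
          _ ≤ (M ^ k * (v - s) ^ k / (Nat.factorial k)) * M := by
              refine mul_le_mul (ih v hvmem) ?_ (norm_nonneg _) ?_
              · rw [hτ]; exact hWle v hvmem
              · positivity
          _ = M ^ (k + 1) * (v - s) ^ k / (Nat.factorial k) := by ring
      have hgi : IntervalIntegrable (fun v => M ^ (k + 1) * (v - s) ^ k / (Nat.factorial k))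
          MeasureTheory.volume s u := by
        apply Continuous.intervalIntegrable
        continuity
      have h1 : ‖dysonTerm τ W s (k + 1) u‖ ≤
          |∫ v in s..u, M ^ (k + 1) * (v - s) ^ k / (Nat.factorial k)| :=
        intervalIntegral.norm_integral_le_abs_of_norm_le hbound hgi
      have h2 : (∫ v in s..u, M ^ (k + 1) * (v - s) ^ k / (Nat.factorial k)) =
          M ^ (k + 1) * (u - s) ^ (k + 1) / (Nat.factorial (k + 1)) := by
        have : (∫ v in s..u, M ^ (k + 1) * (v - s) ^ k / (Nat.factorial k)) =
            (M ^ (k + 1) / (Nat.factorial k)) * ∫ v in s..u, (v - s) ^ k := by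
          rw [← intervalIntegral.integral_const_mul]
          congr 1; ext v; ring
        rw [this]
        have h3 : (∫ v in s..u, (v - s) ^ k) = (u - s) ^ (k + 1) / (k + 1) := by
          rw [intervalIntegral.integral_comp_sub_right (fun x => x ^ k) s]
          simp [integral_pow]
        have hk : (Nat.factorial k : ℝ) ≠ 0 := Nat.cast_ne_zero.mpr (Nat.factorial_ne_zero k)
        have hk1 : (k : ℝ) + 1 ≠ 0 := by positivity
        rw [h3, Nat.factorial_succ]
        push_cast
        rw [div_mul_div_comm]
        ring_nf
      calc ‖dysonTerm τ W s (k + 1) u‖ ≤ _ := h1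
        _ = M ^ (k + 1) * (u - s) ^ (k + 1) / (Nat.factorial (k + 1)) := by
            have husnn : 0 ≤ u - s := sub_nonneg.mpr hsu
            rw [h2, abs_of_nonneg (by positivity)]
  have hnormI : ∀ k : ℕ, ∀ x : 𝒱, ‖(Complex.I ^ k) • x‖ = ‖x‖ := by
    intro k x
    rw [norm_smul, norm_pow, Complex.norm_I, one_pow, one_mul]
  have bound1 : ∀ k : ℕ, 1 ≤ k →
      ‖(Complex.I ^ k) • dysonTerm τ W s k t‖ ≤ M ^ k * (t - s) ^ k / (Nat.factorial k) := by
    intro k _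
    rw [hnormI]
    exact key k t ⟨hst, le_refl t⟩
  refine ⟨bound1, ?_, ?_⟩
  · -- summability
    have hsum : Summable fun k : ℕ => (M * (t - s)) ^ (k + 1) / (Nat.factorial (k + 1)) := by
      have := Real.summable_pow_div_factorial (M * (t - s))
      exact (summable_nat_add_iff 1).mpr this
    refine Summable.of_nonneg_of_le (fun k => norm_nonneg _) (fun k => ?_) hsum
    calc ‖(Complex.I ^ (k + 1)) • dysonTerm τ W s (k + 1) t‖
        ≤ M ^ (k + 1) * (t - s) ^ (k + 1) / (Nat.factorial (k + 1)) :=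
          bound1 (k + 1) (Nat.le_add_left 1 k)
      _ = (M * (t - s)) ^ (k + 1) / (Nat.factorial (k + 1)) := by rw [mul_pow]
  · -- the exponential bound
    have hsum : Summable fun k : ℕ => (M * (t - s)) ^ (k + 1) / (Nat.factorial (k + 1)) := by
      have := Real.summable_pow_div_factorial (M * (t - s))
      exact (summable_nat_add_iff 1).mpr this
    have hle : ∀ k : ℕ, ‖(Complex.I ^ (k + 1)) • dysonTerm τ W s (k + 1) t‖ ≤
        (M * (t - s)) ^ (k + 1) / (Nat.factorial (k + 1)) := by
      intro k
      calc ‖(Complex.I ^ (k + 1)) • dysonTerm τ W s (k + 1) t‖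
          ≤ M ^ (k + 1) * (t - s) ^ (k + 1) / (Nat.factorial (k + 1)) :=
            bound1 (k + 1) (Nat.le_add_left 1 k)
        _ = (M * (t - s)) ^ (k + 1) / (Nat.factorial (k + 1)) := by rw [mul_pow]
    have hsummable : Summable fun k : ℕ => ‖(Complex.I ^ (k + 1)) • dysonTerm τ W s (k + 1) t‖ :=
      Summable.of_nonneg_of_le (fun k => norm_nonneg _) hle hsum
    have hexp : Real.exp (M * (t - s)) = ∑' n : ℕ, (M * (t - s)) ^ n / (Nat.factorial n) := by
      rw [Real.exp_eq_exp_ℝ, NormedSpace.exp_eq_tsum_div]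
    have hsum0 : Summable fun n : ℕ => (M * (t - s)) ^ n / (Nat.factorial n) :=
      Real.summable_pow_div_factorial (M * (t - s))
    calc ‖(1 : 𝒱) + ∑' k : ℕ, (Complex.I ^ (k + 1)) • dysonTerm τ W s (k + 1) t‖
        ≤ ‖(1 : 𝒱)‖ + ‖∑' k : ℕ, (Complex.I ^ (k + 1)) • dysonTerm τ W s (k + 1) t‖ :=
          norm_add_le _ _
      _ ≤ 1 + ∑' k : ℕ, ‖(Complex.I ^ (k + 1)) • dysonTerm τ W s (k + 1) t‖ :=
          add_le_add hone (norm_tsum_le_tsum_norm hsummable)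
      _ ≤ 1 + ∑' k : ℕ, (M * (t - s)) ^ (k + 1) / (Nat.factorial (k + 1)) :=
          add_le_add (le_refl 1) (hsummable.tsum_le_tsum hle hsum)
      _ = ∑' n : ℕ, (M * (t - s)) ^ n / (Nat.factorial n) := by
          rw [hsum0.tsum_eq_zero_add]
          simp
      _ = Real.exp (M * (t - s)) := hexp.symm
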